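/- There exists an integer t_0 such that for every integer t ≥ t_0, setting n = ⌊2^{t/3}⌋, there exists a bipartite graph G with parts A and B of size n each satisfying simultaneously: (i) G contains no K_{t,t} as a subgraph; (ii) for all subsets X ⊆ A and Y ⊆ B with |X| = |Y| = t, there is at least one edge of G between X and Y; and (iii) G contains no induced matching of size t. -/
import Mathlib


/-- A set of vertices is independent: pairwise nonadjacent. -/
def IsIndep {V : Type*} (G : SimpleGraph V) (s : Set V) : Prop :=
  s.Pairwise fun u v => ¬ G.Adj u v

/-- Independence number of the subgraph of `G` induced by `X`. -/
noncomputable def indepNumOn {V : Type*} (G : SimpleGraph V) (X : Set V) : ℕ :=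
  sSup {k | ∃ s : Finset V, ↑s ⊆ X ∧ IsIndep G ↑s ∧ s.card = k}

/-- `M` is a matching in `G`: adjacent endpoints, pairwise vertex-disjoint edges. -/
def IsMatching' {V : Type*} (G : SimpleGraph V) (M : Finset (V × V)) : Prop :=
  (∀ e ∈ M, G.Adj e.1 e.2) ∧
  ∀ e ∈ M, ∀ f ∈ M, e ≠ f →
    e.1 ≠ f.1 ∧ e.1 ≠ f.2 ∧ e.2 ≠ f.1 ∧ e.2 ≠ f.2

/-- `M` is an induced matching in `G`. -/
def IsInducedMatching {V : Type*} (G : SimpleGraph V) (M : Finset (V × V)) : Prop :=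
  IsMatching' G M ∧
  ∀ e ∈ M, ∀ f ∈ M, e ≠ f →
    ¬ G.Adj e.1 f.1 ∧ ¬ G.Adj e.1 f.2 ∧ ¬ G.Adj e.2 f.1 ∧ ¬ G.Adj e.2 f.2

/-- `μ(G, X)`: maximum size of an induced matching in `G` every edge of which
has an endpoint in `X`. -/
noncomputable def indMatchNumOn {V : Type*} (G : SimpleGraph V) (X : Set V) : ℕ :=
  sSup {k | ∃ M : Finset (V × V), IsInducedMatching G M ∧
    (∀ e ∈ M, e.1 ∈ X ∨ e.2 ∈ X) ∧ M.card = k}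

/-- `(T, bag)` is a tree decomposition of `G`. -/
structure IsTreeDecomp {V : Type*} (G : SimpleGraph V) {ι : Type}
    (T : SimpleGraph ι) (bag : ι → Set V) : Prop where
  isTree : T.IsTree
  edge_mem : ∀ ⦃u v : V⦄, G.Adj u v → ∃ x, u ∈ bag x ∧ v ∈ bag x
  support_connected : ∀ v : V, (T.induce {x | v ∈ bag x}).Connected

/-- A (bundled) tree decomposition of `G`. -/
structure TreeDecomp {V : Type*} (G : SimpleGraph V) where
  ι : Type
  tree : SimpleGraph ι
  bag : ι → Set V
  is_td : IsTreeDecomp G tree bag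

/-- Independence number of a tree decomposition. -/
noncomputable def TreeDecomp.alpha {V : Type*} {G : SimpleGraph V} (D : TreeDecomp G) : ℕ :=
  sSup {k | ∃ x : D.ι, k = indepNumOn G (D.bag x)}

/-- Induced matching number of a tree decomposition. -/
noncomputable def TreeDecomp.mu {V : Type*} {G : SimpleGraph V} (D : TreeDecomp G) : ℕ :=
  sSup {k | ∃ x : D.ι, k = indMatchNumOn G (D.bag x)}

/-- Tree-independence number of `G`. -/
noncomputable def treeIndepNum {V : Type*} (G : SimpleGraph V) : ℕ :=
  sInf {k | ∃ D : TreeDecomp G, D.alpha = k}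

/-- Induced matching treewidth of `G`. -/
noncomputable def imTreewidth {V : Type*} (G : SimpleGraph V) : ℕ :=
  sInf {k | ∃ D : TreeDecomp G, D.mu = k}

/-- `G` has no induced subgraph isomorphic to `K_{t,t}`. -/
def KttFree {V : Type*} (G : SimpleGraph V) (t : ℕ) : Prop :=
  IsEmpty (completeBipartiteGraph (Fin t) (Fin t) ↪g G)

/-- `G` contains `K_{t,t}` as a (not necessarily induced) subgraph. -/
def HasKttSubgraph {V : Type*} (G : SimpleGraph V) (t : ℕ) : Prop :=
  ∃ A B : Finset V, Disjoint A B ∧ A.card = t ∧ B.card = t ∧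
    ∀ a ∈ A, ∀ b ∈ B, G.Adj a b

/-- `G` is bipartite: its vertex set is the union of two independent sets. -/
def IsBipartite {V : Type*} (G : SimpleGraph V) : Prop :=
  ∃ A B : Set V, A ∪ B = Set.univ ∧ IsIndep G A ∧ IsIndep G B

/-- `N(X)`: vertices outside `X` adjacent to at least one vertex of `X`. -/
def nbhd {V : Type*} (G : SimpleGraph V) (X : Set V) : Set V :=
  {v | v ∉ X ∧ ∃ u ∈ X, G.Adj u v}

open Finset

section Setup
variable {n t : ℕ}

private def rel0 (M : Fin n × Fin n → Bool) : (Fin n ⊕ Fin n) → (Fin n ⊕ Fin n) → Prop :=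
  fun u v => ∃ a b, u = Sum.inl a ∧ v = Sum.inr b ∧ M (a, b) = true

private def myG (M : Fin n × Fin n → Bool) : SimpleGraph (Fin n ⊕ Fin n) :=
  SimpleGraph.fromRel (rel0 M)

private lemma myG_adj_inl_inr (M : Fin n × Fin n → Bool) (a b : Fin n) :
    (myG M).Adj (Sum.inl a) (Sum.inr b) ↔ M (a, b) = true := by
  simp [myG, rel0, SimpleGraph.fromRel_adj]

private lemma myG_not_inl_inl (M : Fin n × Fin n → Bool) (a b : Fin n) :
    ¬ (myG M).Adj (Sum.inl a) (Sum.inl b) := by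
  simp [myG, rel0, SimpleGraph.fromRel_adj]

private lemma myG_not_inr_inr (M : Fin n × Fin n → Bool) (a b : Fin n) :
    ¬ (myG M).Adj (Sum.inr a) (Sum.inr b) := by
  simp [myG, rel0, SimpleGraph.fromRel_adj]

private lemma myG_adj_cases {M : Fin n × Fin n → Bool} {u v : Fin n ⊕ Fin n}
    (h : (myG M).Adj u v) :
    ∃ a b, M (a, b) = true ∧ ((u = Sum.inl a ∧ v = Sum.inr b) ∨ (u = Sum.inr b ∧ v = Sum.inl a)) := by
  rcases u with a | a <;> rcases v with b | b
  · exact absurd h (myG_not_inl_inl M a b)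
  · exact ⟨a, b, (myG_adj_inl_inr M a b).1 h, Or.inl ⟨rfl, rfl⟩⟩
  · exact ⟨b, a, (myG_adj_inl_inr M b a).1 h.symm, Or.inr ⟨rfl, rfl⟩⟩
  · exact absurd h (myG_not_inr_inr M a b)

private def B1 (t : ℕ) (M : Fin n × Fin n → Bool) : Prop :=
  ∃ X Y : Finset (Fin n), X.card = t ∧ Y.card = t ∧ ∀ a ∈ X, ∀ b ∈ Y, M (a, b) = true

private def B2 (t : ℕ) (M : Fin n × Fin n → Bool) : Prop :=
  ∃ X Y : Finset (Fin n), X.card = t ∧ Y.card = t ∧ ∀ a ∈ X, ∀ b ∈ Y, M (a, b) = false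

private def B3 (t : ℕ) (M : Fin n × Fin n → Bool) : Prop :=
  ∃ f g : Fin t → Fin n, Function.Injective f ∧ Function.Injective g ∧
    (∀ i, M (f i, g i) = true) ∧ ∀ i j : Fin t, i ≠ j → M (f i, g j) = false

private lemma ktt_aux {M : Fin n × Fin n → Bool} {A B : Finset (Fin n ⊕ Fin n)}
    (hA : A.card = t) (hB : B.card = t)
    (hadj : ∀ a ∈ A, ∀ b ∈ B, (myG M).Adj a b)
    (hAl : ∀ a ∈ A, ∃ x, a = Sum.inl x) (hBr : ∀ b ∈ B, ∃ y, b = Sum.inr y) :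
    B1 t M := by
  classical
  refine ⟨A.image (Sum.elim id id), B.image (Sum.elim id id), ?_, ?_, ?_⟩
  · rw [Finset.card_image_of_injOn, hA]
    intro a ha a' ha' h
    obtain ⟨x, rfl⟩ := hAl a ha
    obtain ⟨x', rfl⟩ := hAl a' ha'
    simpa using h
  · rw [Finset.card_image_of_injOn, hB]
    intro b hb b' hb' h
    obtain ⟨y, rfl⟩ := hBr b hb
    obtain ⟨y', rfl⟩ := hBr b' hb'
    simpa using h
  · intro x hx y hy
    simp only [Finset.mem_image] at hx hy
    obtain ⟨a, ha, hax⟩ := hx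
    obtain ⟨b, hb, hby⟩ := hy
    obtain ⟨x', rfl⟩ := hAl a ha
    obtain ⟨y', rfl⟩ := hBr b hb
    simp only [Sum.elim_inl, Sum.elim_inr, id] at hax hby
    subst hax; subst hby
    exact (myG_adj_inl_inr M x' y').1 (hadj _ ha _ hb)

private lemma not_ktt {M : Fin n × Fin n → Bool} (hB1 : ¬ B1 t M) (ht : 1 ≤ t) :
    ¬ HasKttSubgraph (myG M) t := by
  rintro ⟨A, B, _, hA, hB, hadj⟩
  obtain ⟨a₀, ha₀⟩ := Finset.card_pos.mp (hA ▸ ht)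
  obtain ⟨b₀, hb₀⟩ := Finset.card_pos.mp (hB ▸ ht)
  rcases a₀ with x | y
  · have hBr : ∀ b ∈ B, ∃ y, b = Sum.inr y := by
      intro b hb
      rcases b with y | y
      · exact absurd (hadj _ ha₀ _ hb) (myG_not_inl_inl M x y)
      · exact ⟨y, rfl⟩
    have hAl : ∀ a ∈ A, ∃ x, a = Sum.inl x := by
      intro a ha
      obtain ⟨y₀, rfl⟩ := hBr b₀ hb₀
      rcases a with x' | x'
      · exact ⟨x', rfl⟩
      · exact absurd (hadj _ ha _ hb₀) (myG_not_inr_inr M x' y₀)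
    exact hB1 (ktt_aux hA hB hadj hAl hBr)
  · have hBl : ∀ b ∈ B, ∃ x, b = Sum.inl x := by
      intro b hb
      rcases b with x | x
      · exact ⟨x, rfl⟩
      · exact absurd (hadj _ ha₀ _ hb) (myG_not_inr_inr M y x)
    have hAr : ∀ a ∈ A, ∃ y, a = Sum.inr y := by
      intro a ha
      obtain ⟨x₀, rfl⟩ := hBl b₀ hb₀
      rcases a with x' | x'
      · exact absurd (hadj _ ha _ hb₀) (myG_not_inl_inl M x' x₀)
      · exact ⟨x', rfl⟩
    exact hB1 (ktt_aux hB hA (fun b hb a ha => (hadj a ha b hb).symm) hBl hAr)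

private lemma edge_between {M : Fin n × Fin n → Bool} (hB2 : ¬ B2 t M) :
    ∀ X Y : Finset (Fin n), X.card = t → Y.card = t →
      ∃ a ∈ X, ∃ b ∈ Y, (myG M).Adj (Sum.inl a) (Sum.inr b) := by
  intro X Y hX hY
  by_contra h
  push_neg at h
  refine hB2 ⟨X, Y, hX, hY, fun a ha b hb => ?_⟩
  have := h a ha b hb
  rw [myG_adj_inl_inr] at this
  exact Bool.eq_false_iff.mpr this

private lemma not_ind_matching {M : Fin n × Fin n → Bool} (hB3 : ¬ B3 t M) :
    ¬ ∃ Mm : Finset ((Fin n ⊕ Fin n) × (Fin n ⊕ Fin n)),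
        IsInducedMatching (myG M) Mm ∧ Mm.card = t := by
  rintro ⟨Mm, ⟨⟨hadj, hdisj⟩, hind⟩, hcard⟩
  have ee : Fin t ≃ {x // x ∈ Mm} := ((Mm.equivFin).trans (finCongr hcard)).symm
  have hexx : ∀ i : Fin t, ∃ a b, M (a, b) = true ∧
      (((ee i).1.1 = Sum.inl a ∧ (ee i).1.2 = Sum.inr b) ∨
       ((ee i).1.1 = Sum.inr b ∧ (ee i).1.2 = Sum.inl a)) :=
    fun i => myG_adj_cases (hadj _ (ee i).2)
  choose f g hM hor using hexx
  have hf : ∀ i, (ee i).1.1 = Sum.inl (f i) ∨ (ee i).1.2 = Sum.inl (f i) :=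
    fun i => (hor i).elim (fun h => Or.inl h.1) (fun h => Or.inr h.2)
  have hg : ∀ i, (ee i).1.1 = Sum.inr (g i) ∨ (ee i).1.2 = Sum.inr (g i) :=
    fun i => (hor i).elim (fun h => Or.inr h.2) (fun h => Or.inl h.1)
  have heene : ∀ i j : Fin t, i ≠ j → (ee i).1 ≠ (ee j).1 :=
    fun i j hij h => hij (ee.injective (Subtype.ext h))
  have hne : ∀ i j : Fin t, i ≠ j → ∀ u v,
      ((ee i).1.1 = u ∨ (ee i).1.2 = u) → ((ee j).1.1 = v ∨ (ee j).1.2 = v) → u ≠ v := by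
    intro i j hij u v hu hv
    have h4 := hdisj (ee i).1 (ee i).2 (ee j).1 (ee j).2 (heene i j hij)
    rcases hu with hu | hu <;> rcases hv with hv | hv <;> rw [← hu, ← hv] <;> tauto
  have hnadj : ∀ i j : Fin t, i ≠ j → ∀ u v,
      ((ee i).1.1 = u ∨ (ee i).1.2 = u) → ((ee j).1.1 = v ∨ (ee j).1.2 = v) →
      ¬ (myG M).Adj u v := by
    intro i j hij u v hu hv
    have h4 := hind (ee i).1 (ee i).2 (ee j).1 (ee j).2 (heene i j hij)
    rcases hu with hu | hu <;> rcases hv with hv | hv <;> rw [← hu, ← hv] <;> tauto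
  refine hB3 ⟨f, g, ?_, ?_, hM, ?_⟩
  · intro i j hfeq
    by_contra hij
    exact hne i j hij _ _ (hf i) (hf j) (congrArg Sum.inl hfeq)
  · intro i j hgeq
    by_contra hij
    exact hne i j hij _ _ (hg i) (hg j) (congrArg Sum.inr hgeq)
  · intro i j hij
    by_contra hMt
    rw [Bool.not_eq_false] at hMt
    exact hnadj i j hij _ _ (hf i) (hg j) ((myG_adj_inl_inr M _ _).2 hMt)

private lemma card_pattern {α : Type*} [Fintype α] [DecidableEq α] (S : Finset α) (v : α → Bool) :
    (Finset.univ.filter fun M : α → Bool => ∀ p ∈ S, M p = v p).card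
      = 2 ^ (Fintype.card α - S.card) := by
  classical
  rw [← Fintype.card_subtype]
  have e : {M : α → Bool // ∀ p ∈ S, M p = v p} ≃ ({a : α // a ∉ S} → Bool) :=
    { toFun := fun M a => M.1 a.1
      invFun := fun h => ⟨fun a => if ha : a ∈ S then v a else h ⟨a, ha⟩,
        fun p hp => dif_pos hp⟩
      left_inv := by
        rintro ⟨M, hM⟩
        ext a
        dsimp only
        by_cases ha : a ∈ S
        · rw [dif_pos ha, hM a ha]
        · rw [dif_neg ha]
      right_inv := by
        intro h
        funext a
        exact dif_neg a.2 }
  rw [Fintype.card_congr e, Fintype.card_fun, Fintype.card_bool,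
    Fintype.card_subtype_compl, Fintype.card_coe]

set_option maxHeartbeats 1000000 in
private lemma exists_good (ht : 3 ≤ t) (htn : t ≤ n) (hn : n ^ 3 ≤ 2 ^ t) :
    ∃ M : Fin n × Fin n → Bool, ¬ B1 t M ∧ ¬ B2 t M ∧ ¬ B3 t M := by
  classical
  have hcard : Fintype.card (Fin n × Fin n) = n * n := by simp
  -- bound on monochromatic-block counts
  have key : ∀ b : Bool, (Finset.univ.filter fun M : Fin n × Fin n → Bool =>
      ∃ X Y : Finset (Fin n), X.card = t ∧ Y.card = t ∧ ∀ x ∈ X, ∀ y ∈ Y, M (x, y) = b).card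
      ≤ (n ^ t * n ^ t) * 2 ^ (n * n - t * t) := by
    intro b
    set W := (Finset.powersetCard t (Finset.univ : Finset (Fin n))) ×ˢ
      (Finset.powersetCard t (Finset.univ : Finset (Fin n))) with hW
    have hsub : (Finset.univ.filter fun M : Fin n × Fin n → Bool =>
        ∃ X Y : Finset (Fin n), X.card = t ∧ Y.card = t ∧ ∀ x ∈ X, ∀ y ∈ Y, M (x, y) = b)
        ⊆ W.biUnion (fun P => Finset.univ.filter fun M : Fin n × Fin n → Bool =>
          ∀ p ∈ P.1 ×ˢ P.2, M p = b) := by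
      intro M hM
      simp only [Finset.mem_filter, Finset.mem_univ, true_and] at hM
      obtain ⟨X, Y, hX, hY, hall⟩ := hM
      refine Finset.mem_biUnion.2 ⟨(X, Y), ?_, ?_⟩
      · simp [hW, Finset.mem_powersetCard_univ, hX, hY]
      · simp only [Finset.mem_filter, Finset.mem_univ, true_and]
        rintro ⟨x, y⟩ hp
        rw [Finset.mem_product] at hp
        exact hall x hp.1 y hp.2
    have hchoose : n.choose t ≤ n ^ t :=
      (Nat.choose_le_descFactorial n t).trans (Nat.descFactorial_le_pow n t)
    calc _ ≤ (W.biUnion (fun P => Finset.univ.filter fun M : Fin n × Fin n → Bool =>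
            ∀ p ∈ P.1 ×ˢ P.2, M p = b)).card := Finset.card_le_card hsub
      _ ≤ ∑ P ∈ W, (Finset.univ.filter fun M : Fin n × Fin n → Bool =>
            ∀ p ∈ P.1 ×ˢ P.2, M p = b).card := Finset.card_biUnion_le
      _ ≤ W.card • 2 ^ (n * n - t * t) := by
          refine Finset.sum_le_card_nsmul _ _ _ ?_
          intro P hP
          rw [hW, Finset.mem_product] at hP
          have h1 : P.1.card = t := Finset.mem_powersetCard_univ.1 hP.1
          have h2 : P.2.card = t := Finset.mem_powersetCard_univ.1 hP.2
          have := card_pattern (P.1 ×ˢ P.2) (fun _ => b)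
          rw [hcard, Finset.card_product, h1, h2] at this
          exact this.le
      _ ≤ (n ^ t * n ^ t) * 2 ^ (n * n - t * t) := by
          rw [smul_eq_mul]
          have hWc : W.card ≤ n ^ t * n ^ t := by
            rw [hW, Finset.card_product, Finset.card_powersetCard, Finset.card_univ,
              Fintype.card_fin]
            exact Nat.mul_le_mul hchoose hchoose
          exact Nat.mul_le_mul_right _ hWc
  have h3 : (Finset.univ.filter fun M : Fin n × Fin n → Bool => B3 t M).card
      ≤ (n ^ t * n ^ t) * 2 ^ (n * n - t * t) := by
    set W := (Finset.univ : Finset ((Fin t → Fin n) × (Fin t → Fin n))).filter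
      (fun P => Function.Injective P.1 ∧ Function.Injective P.2) with hW
    set pat : ((Fin t → Fin n) × (Fin t → Fin n)) → Finset (Fin n × Fin n) :=
      fun P => Finset.image (fun ij : Fin t × Fin t => (P.1 ij.1, P.2 ij.2)) Finset.univ with hpat
    set vv : ((Fin t → Fin n) × (Fin t → Fin n)) → (Fin n × Fin n) → Bool :=
      fun P p => decide (∃ i, p = (P.1 i, P.2 i)) with hvv
    have hsub : (Finset.univ.filter fun M : Fin n × Fin n → Bool => B3 t M)
        ⊆ W.biUnion (fun P => Finset.univ.filter fun M : Fin n × Fin n → Bool =>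
          ∀ p ∈ pat P, M p = vv P p) := by
      intro M hM
      simp only [Finset.mem_filter, Finset.mem_univ, true_and] at hM
      obtain ⟨f, g, hf, hg, hdiag, hoff⟩ := hM
      refine Finset.mem_biUnion.2 ⟨(f, g), ?_, ?_⟩
      · simp [hW, hf, hg]
      · simp only [Finset.mem_filter, Finset.mem_univ, true_and]
        intro p hp
        simp only [hpat, Finset.mem_image, Finset.mem_univ, true_and] at hp
        obtain ⟨⟨i, j⟩, rfl⟩ := hp
        by_cases hij : i = j
        · subst hij
          rw [hdiag i]
          symm
          simp only [hvv, decide_eq_true_eq]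
          exact ⟨i, rfl⟩
        · rw [hoff i j hij]
          symm
          simp only [hvv, decide_eq_false_iff_not]
          rintro ⟨k, hk⟩
          simp only [Prod.mk.injEq] at hk
          exact hij ((hf hk.1).trans (hg hk.2).symm)
    calc _ ≤ (W.biUnion (fun P => Finset.univ.filter fun M : Fin n × Fin n → Bool =>
            ∀ p ∈ pat P, M p = vv P p)).card := Finset.card_le_card hsub
      _ ≤ ∑ P ∈ W, (Finset.univ.filter fun M : Fin n × Fin n → Bool =>
            ∀ p ∈ pat P, M p = vv P p).card := Finset.card_biUnion_le
      _ ≤ W.card • 2 ^ (n * n - t * t) := by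
          refine Finset.sum_le_card_nsmul _ _ _ ?_
          intro P hP
          rw [hW, Finset.mem_filter] at hP
          obtain ⟨-, hf, hg⟩ := hP
          have hinj : Function.Injective (fun ij : Fin t × Fin t => (P.1 ij.1, P.2 ij.2)) := by
            rintro ⟨i, j⟩ ⟨i', j'⟩ h
            simp only [Prod.mk.injEq] at h
            exact Prod.ext (hf h.1) (hg h.2)
          have hcardpat : (pat P).card = t * t := by
            rw [hpat]
            rw [Finset.card_image_of_injective _ hinj, Finset.card_univ]
            simp
          have := card_pattern (pat P) (vv P)
          rw [hcard, hcardpat] at this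
          exact this.le
      _ ≤ (n ^ t * n ^ t) * 2 ^ (n * n - t * t) := by
          rw [smul_eq_mul]
          have hWc : W.card ≤ n ^ t * n ^ t := by
            calc W.card ≤ (Finset.univ : Finset ((Fin t → Fin n) × (Fin t → Fin n))).card :=
                  Finset.card_filter_le _ _
              _ = n ^ t * n ^ t := by
                  rw [Finset.card_univ, Fintype.card_prod, Fintype.card_fun]
                  simp
          exact Nat.mul_le_mul_right _ hWc
  -- total bound
  have hbad : (Finset.univ.filter fun M : Fin n × Fin n → Bool =>
      B1 t M ∨ B2 t M ∨ B3 t M).card < 2 ^ (n * n) := by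
    have hle : (Finset.univ.filter fun M : Fin n × Fin n → Bool =>
        B1 t M ∨ B2 t M ∨ B3 t M).card ≤ 3 * (n ^ t * n ^ t) * 2 ^ (n * n - t * t) := by
      rw [Finset.filter_or, Finset.filter_or]
      calc _ ≤ (Finset.univ.filter fun M : Fin n × Fin n → Bool => B1 t M).card +
            ((Finset.univ.filter fun M : Fin n × Fin n → Bool => B2 t M) ∪
             (Finset.univ.filter fun M : Fin n × Fin n → Bool => B3 t M)).card :=
            Finset.card_union_le _ _
        _ ≤ (Finset.univ.filter fun M : Fin n × Fin n → Bool => B1 t M).card +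
            ((Finset.univ.filter fun M : Fin n × Fin n → Bool => B2 t M).card +
             (Finset.univ.filter fun M : Fin n × Fin n → Bool => B3 t M).card) := by
            gcongr
            exact Finset.card_union_le _ _
        _ ≤ (n ^ t * n ^ t) * 2 ^ (n * n - t * t) +
            ((n ^ t * n ^ t) * 2 ^ (n * n - t * t) + (n ^ t * n ^ t) * 2 ^ (n * n - t * t)) := by
            have kb1 : (Finset.univ.filter fun M : Fin n × Fin n → Bool => B1 t M).card
                ≤ (n ^ t * n ^ t) * 2 ^ (n * n - t * t) := by
              refine le_trans (Finset.card_le_card ?_) (key true)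
              intro M hM
              simp only [Finset.mem_filter] at *
              exact ⟨hM.1, hM.2⟩
            have kb2 : (Finset.univ.filter fun M : Fin n × Fin n → Bool => B2 t M).card
                ≤ (n ^ t * n ^ t) * 2 ^ (n * n - t * t) := by
              refine le_trans (Finset.card_le_card ?_) (key false)
              intro M hM
              simp only [Finset.mem_filter] at *
              exact ⟨hM.1, hM.2⟩
            exact add_le_add kb1 (add_le_add kb2 h3)
        _ = 3 * (n ^ t * n ^ t) * 2 ^ (n * n - t * t) := by ring
    have hstrict : 3 * (n ^ t * n ^ t) < 2 ^ (t * t) := by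
      rw [← Nat.pow_lt_pow_iff_left (show 3 ≠ 0 by norm_num)]
      have h1 : (3 * (n ^ t * n ^ t)) ^ 3 = 27 * (n ^ 3) ^ (2 * t) := by
        rw [mul_pow, ← pow_add, ← pow_mul, ← pow_mul]
        norm_num
        congr 1
        ring
      have h2 : (n ^ 3) ^ (2 * t) ≤ (2 ^ t) ^ (2 * t) := Nat.pow_le_pow_left hn _
      have h27 : 27 < 2 ^ (t * t) := by
        calc (27 : ℕ) < 2 ^ 9 := by norm_num
          _ ≤ 2 ^ (t * t) := Nat.pow_le_pow_right (by norm_num) (by nlinarith)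
      calc (3 * (n ^ t * n ^ t)) ^ 3 = 27 * (n ^ 3) ^ (2 * t) := h1
        _ ≤ 27 * (2 ^ t) ^ (2 * t) := Nat.mul_le_mul_left _ h2
        _ < 2 ^ (t * t) * (2 ^ t) ^ (2 * t) :=
            (Nat.mul_lt_mul_right (by positivity)).mpr h27
        _ = (2 ^ (t * t)) ^ 3 := by
            rw [← pow_mul, ← pow_add, ← pow_mul]
            congr 1
            ring
    calc _ ≤ 3 * (n ^ t * n ^ t) * 2 ^ (n * n - t * t) := hle
      _ < 2 ^ (t * t) * 2 ^ (n * n - t * t) :=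
          (Nat.mul_lt_mul_right (by positivity)).mpr hstrict
      _ = 2 ^ (n * n) := by
          rw [← pow_add, Nat.add_sub_cancel' (Nat.mul_le_mul htn htn)]
  -- extract a good M
  by_contra hcon
  push_neg at hcon
  have hall : ∀ M : Fin n × Fin n → Bool, B1 t M ∨ B2 t M ∨ B3 t M := by
    intro M
    have := hcon M
    tauto
  have huniv : (Finset.univ.filter fun M : Fin n × Fin n → Bool =>
      B1 t M ∨ B2 t M ∨ B3 t M) = Finset.univ := by
    apply Finset.eq_univ_iff_forall.2
    intro M
    simp only [Finset.mem_filter, Finset.mem_univ, true_and]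
    exact hall M
  rw [huniv, Finset.card_univ, Fintype.card_fun, Fintype.card_bool, hcard] at hbad
  exact lt_irrefl _ hbad

private lemma cube_le_two_pow {t : ℕ} (h : 10 ≤ t) : t ^ 3 ≤ 2 ^ t := by
  induction t, h using Nat.le_induction with
  | base => norm_num
  | succ t ht ih =>
    calc (t + 1) ^ 3 ≤ 2 * t ^ 3 := by nlinarith [sq_nonneg t, ht, Nat.one_le_iff_ne_zero.mpr (by omega : t ≠ 0)]
      _ ≤ 2 * 2 ^ t := Nat.mul_le_mul_left _ ih
      _ = 2 ^ (t + 1) := by rw [pow_succ]; ring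

end Setup


/-- there exists `t₀` such that for every `t ≥ t₀`, with `n = ⌊2^{t/3}⌋`,
there is a bipartite graph with parts of size `n` containing no `K_{t,t}` subgraph, having
an edge between any two `t`-subsets of opposite parts, and having no induced matching of
size `t`. -/
theorem stmt13 : ∃ t₀ : ℕ, ∀ t : ℕ, t₀ ≤ t →
    ∀ n : ℕ, n = ⌊(2 : ℝ) ^ ((t : ℝ) / 3)⌋₊ →
      ∃ G : SimpleGraph (Fin n ⊕ Fin n),
        (∀ a b : Fin n, ¬ G.Adj (Sum.inl a) (Sum.inl b)) ∧
        (∀ a b : Fin n, ¬ G.Adj (Sum.inr a) (Sum.inr b)) ∧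
        ¬ HasKttSubgraph G t ∧
        (∀ X Y : Finset (Fin n), X.card = t → Y.card = t →
          ∃ a ∈ X, ∃ b ∈ Y, G.Adj (Sum.inl a) (Sum.inr b)) ∧
        ¬ ∃ M : Finset ((Fin n ⊕ Fin n) × (Fin n ⊕ Fin n)),
            IsInducedMatching G M ∧ M.card = t := by
  refine ⟨10, ?_⟩
  intro t ht n hn
  have ht3 : 3 ≤ t := by omega
  have hx : (0:ℝ) ≤ (2:ℝ) ^ ((t:ℝ) / 3) := le_of_lt (Real.rpow_pos_of_pos two_pos _)
  have hcube : ((2:ℝ) ^ ((t:ℝ) / 3)) ^ (3:ℕ) = (2:ℝ) ^ t := by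
    rw [← Real.rpow_natCast ((2:ℝ) ^ ((t:ℝ) / 3)) 3, ← Real.rpow_mul (by norm_num)]
    have h33 : (t:ℝ) / 3 * ((3:ℕ):ℝ) = (t:ℝ) := by push_cast; ring
    rw [h33, Real.rpow_natCast]
  have hfloor : (n:ℝ) ≤ (2:ℝ) ^ ((t:ℝ) / 3) := by
    rw [hn]; exact Nat.floor_le hx
  have hn3 : n ^ 3 ≤ 2 ^ t := by
    have hr : ((n:ℝ)) ^ 3 ≤ (2:ℝ) ^ t := by
      calc ((n:ℝ)) ^ 3 ≤ ((2:ℝ) ^ ((t:ℝ) / 3)) ^ 3 :=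
            pow_le_pow_left₀ (Nat.cast_nonneg n) hfloor 3
        _ = (2:ℝ) ^ t := hcube
    exact_mod_cast hr
  have htn : t ≤ n := by
    rw [hn]
    apply Nat.le_floor
    by_contra hlt
    push_neg at hlt
    have hr : (2:ℝ) ^ t < ((t:ℝ)) ^ 3 := by
      calc (2:ℝ) ^ t = ((2:ℝ) ^ ((t:ℝ) / 3)) ^ 3 := hcube.symm
        _ < ((t:ℝ)) ^ 3 := pow_lt_pow_left₀ hlt hx (by norm_num)
    have h2 : ((t:ℕ)) ^ 3 ≤ 2 ^ t := cube_le_two_pow ht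
    have : (2:ℝ) ^ t < (2:ℝ) ^ t := lt_of_lt_of_le hr (by exact_mod_cast h2)
    exact lt_irrefl _ this
  obtain ⟨M, h1, h2, h3⟩ := exists_good ht3 htn hn3
  exact ⟨myG M, myG_not_inl_inl M, myG_not_inr_inr M, not_ktt h1 (by omega),
    edge_between h2, not_ind_matching h3⟩
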